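/- arXiv:1909.04284 — 3 statements merged into one kernel-verified Lean document; each statement's English description precedes it below -/
import Mathlib

section
/- Let p ≥ 3 be a prime, let q, k ≥ 1 be natural numbers and θ ∈ ℚ_p with |q|_p < |k|_p and |θ − 1|_p < |q|_p². Let x₁ := 1 − q + (k−1)·(1 − q/2 + (k−2)·q²/(6k))·(θ−1) and r := |q·(θ−1)|_p. Then for all x, y in the ball B_r(x₁) one has |f(x) − f(y)|_p · |k·(θ−1)|_p = |q|_p · |x − y|_p (i.e. f expands distances on B_r(x₁) by the factor |q|_p/(|k|_p·|θ−1|_p)). -/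
open Finset IsUltrametricDist

namespace Stmt16Aux


variable {p : ℕ} [Fact p.Prime]

lemma norm_add_eq_left {a b : ℚ_[p]} (h : ‖b‖ < ‖a‖) : ‖a + b‖ = ‖a‖ := by
  rw [Padic.add_eq_max_of_ne h.ne', max_eq_left h.le]

lemma norm_nat_le_one (n : ℕ) : ‖(n : ℚ_[p])‖ ≤ 1 := by
  have := Padic.norm_int_le_one (p := p) (n : ℤ)
  simpa using this

lemma norm_j_lt (hp : 3 ≤ p) (i : ℕ) :
    (p : ℝ) ^ (-(i + 1 : ℕ) : ℤ) < ‖((i + 2 : ℕ) : ℚ_[p])‖ := by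
  have h3 : i + 2 < 3 ^ (i + 1) := by
    induction i with
    | zero => norm_num
    | succ n ih =>
      have h := pow_succ 3 (n + 1)
      omega
  have hlt : i + 2 < p ^ (i + 1) :=
    lt_of_lt_of_le h3 (Nat.pow_le_pow_left hp _)
  have hnd : ¬ ((p : ℤ) ^ (i + 1) ∣ ((i + 2 : ℕ) : ℤ)) := by
    intro hdvd
    rw [show ((p : ℤ) ^ (i+1)) = ((p ^ (i+1) : ℕ) : ℤ) by push_cast; ring,
      Int.natCast_dvd_natCast] at hdvd
    exact absurd (Nat.le_of_dvd (by omega) hdvd) (by omega)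
  have := (Padic.norm_int_le_pow_iff_dvd (p := p) ((i + 2 : ℕ) : ℤ) (i + 1)).not.mpr hnd
  rw [not_le] at this
  simpa using this

lemma binomial_key (hp : 3 ≤ p) {k : ℕ} (hk : 1 ≤ k) {u v : ℚ_[p]} {c : ℝ}
    (hcp : c * p ≤ 1) (hu : ‖u‖ ≤ c) (hv : ‖v‖ ≤ c) (huv : u ≠ v) :
    ‖(1 + u) ^ k - (1 + v) ^ k‖ = ‖(k : ℚ_[p])‖ * ‖u - v‖ := by
  have hc0 : 0 ≤ c := le_trans (norm_nonneg u) hu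
  have hppos : (0:ℝ) < p := by positivity
  have hcinv : c ≤ (p : ℝ)⁻¹ := by
    rw [← one_div]
    exact (le_div_iff₀ hppos).mpr hcp
  obtain ⟨m, rfl⟩ : ∃ m, k = m + 1 := ⟨k - 1, by omega⟩
  have hKne : ((m + 1 : ℕ) : ℚ_[p]) ≠ 0 := Nat.cast_ne_zero.mpr (by omega)
  have hKpos : 0 < ‖((m + 1 : ℕ) : ℚ_[p])‖ := norm_pos_iff.mpr hKne
  have huvpos : 0 < ‖u - v‖ := norm_pos_iff.mpr (sub_ne_zero.mpr huv)
  set f : ℕ → ℚ_[p] := fun j => (u ^ j - v ^ j) * ((m + 1).choose j : ℚ_[p]) with hf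
  have hexp : ∀ w : ℚ_[p],
      (1 + w) ^ (m + 1) = ∑ j ∈ range (m + 2), w ^ j * ((m + 1).choose j : ℚ_[p]) := by
    intro w
    rw [add_comm, add_pow]
    simp
  have hdiff : (1 + u) ^ (m + 1) - (1 + v) ^ (m + 1) = ∑ j ∈ range (m + 2), f j := by
    rw [hexp u, hexp v, ← Finset.sum_sub_distrib]
    exact Finset.sum_congr rfl fun j _ => by simp [hf]; ring
  have hsplit : ∑ j ∈ range (m + 2), f j
      = (u - v) * ((m + 1 : ℕ) : ℚ_[p]) + ∑ i ∈ range m, f (i + 2) := by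
    have h1 : ∑ j ∈ range (m + 2), f j = ∑ i ∈ range (m + 1), f (i + 1) + f 0 :=
      Finset.sum_range_succ' f (m + 1)
    have h2 : ∑ i ∈ range (m + 1), f (i + 1) = ∑ i ∈ range m, f (i + 1 + 1) + f 1 :=
      Finset.sum_range_succ' (fun i => f (i + 1)) m
    have h3 : ∑ i ∈ range m, f (i + 1 + 1) = ∑ i ∈ range m, f (i + 2) :=
      Finset.sum_congr rfl fun i _ => by norm_num
    have hf0 : f 0 = 0 := by simp [hf]
    have hf1 : f 1 = (u - v) * ((m + 1 : ℕ) : ℚ_[p]) := by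
      simp only [hf, pow_one, Nat.choose_one_right]
    rw [h1, h2, h3, hf0, hf1]
    ring
  have hterm : ∀ i ∈ range m, ‖f (i + 2)‖ < ‖((m + 1 : ℕ) : ℚ_[p])‖ * ‖u - v‖ := by
    intro i hi
    have hgeom : ‖∑ j ∈ range (i + 2), u ^ j * v ^ (i + 2 - 1 - j)‖ ≤ c ^ (i + 1) := by
      apply norm_sum_le_of_forall_le_of_nonneg (pow_nonneg hc0 (i + 1))
      intro j hj
      rw [norm_mul, norm_pow, norm_pow]
      calc ‖u‖ ^ j * ‖v‖ ^ (i + 2 - 1 - j)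
          ≤ c ^ j * c ^ (i + 2 - 1 - j) := by
            apply mul_le_mul (pow_le_pow_left₀ (norm_nonneg u) hu j)
              (pow_le_pow_left₀ (norm_nonneg v) hv _) (by positivity) (by positivity)
        _ = c ^ (i + 1) := by
            rw [← pow_add]
            congr 1
            have : j < i + 2 := Finset.mem_range.mp hj
            omega
    have hpows : ‖u ^ (i + 2) - v ^ (i + 2)‖ ≤ c ^ (i + 1) * ‖u - v‖ := by
      rw [← geom_sum₂_mul u v (i + 2), norm_mul]
      exact mul_le_mul_of_nonneg_right hgeom (norm_nonneg _)
    have hid : (m + 1) * m.choose (i + 1) = (m + 1).choose (i + 2) * (i + 2) :=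
      Nat.add_one_mul_choose_eq m (i + 1)
    have hchoose : ‖(((m + 1).choose (i + 2) : ℕ) : ℚ_[p])‖ * ‖((i + 2 : ℕ) : ℚ_[p])‖
        ≤ ‖((m + 1 : ℕ) : ℚ_[p])‖ := by
      rw [← norm_mul, ← Nat.cast_mul, ← hid, Nat.cast_mul, norm_mul]
      exact mul_le_of_le_one_right hKpos.le (norm_nat_le_one _)
    have hCpos : (0:ℝ) < ‖(((m + 1).choose (i + 2) : ℕ) : ℚ_[p])‖ := by
      refine norm_pos_iff.mpr (Nat.cast_ne_zero.mpr (Nat.choose_pos ?_).ne')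
      have := Finset.mem_range.mp hi
      omega
    have hcj : c ^ (i + 1) < ‖((i + 2 : ℕ) : ℚ_[p])‖ := by
      calc c ^ (i + 1) ≤ ((p : ℝ)⁻¹) ^ (i + 1) := pow_le_pow_left₀ hc0 hcinv _
        _ = (p : ℝ) ^ (-(i + 1 : ℕ) : ℤ) := by
            rw [inv_pow, ← zpow_natCast, ← zpow_neg]
        _ < _ := norm_j_lt hp i
    have hCc : ‖(((m + 1).choose (i + 2) : ℕ) : ℚ_[p])‖ * c ^ (i + 1)
        < ‖((m + 1 : ℕ) : ℚ_[p])‖ :=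
      lt_of_lt_of_le (mul_lt_mul_of_pos_left hcj hCpos) hchoose
    calc ‖f (i + 2)‖ = ‖u ^ (i + 2) - v ^ (i + 2)‖ * ‖(((m + 1).choose (i + 2) : ℕ) : ℚ_[p])‖ := by
          rw [hf]; rw [norm_mul]
      _ ≤ (c ^ (i + 1) * ‖u - v‖) * ‖(((m + 1).choose (i + 2) : ℕ) : ℚ_[p])‖ :=
          mul_le_mul_of_nonneg_right hpows (norm_nonneg _)
      _ = (‖(((m + 1).choose (i + 2) : ℕ) : ℚ_[p])‖ * c ^ (i + 1)) * ‖u - v‖ := by ring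
      _ < ‖((m + 1 : ℕ) : ℚ_[p])‖ * ‖u - v‖ :=
          mul_lt_mul_of_pos_right hCc huvpos
  have htail : ‖∑ i ∈ range m, f (i + 2)‖ < ‖((m + 1 : ℕ) : ℚ_[p])‖ * ‖u - v‖ := by
    rcases (range m).eq_empty_or_nonempty with h | h
    · rw [h]
      simpa using mul_pos hKpos huvpos
    · obtain ⟨i, hi, hle⟩ := exists_norm_finset_sum_le_of_nonempty h (fun i => f (i + 2))
      exact lt_of_le_of_lt hle (hterm i hi)
  rw [hdiff, hsplit]
  rw [norm_add_eq_left (by rw [norm_mul]; rw [mul_comm]; exact htail), norm_mul, mul_comm]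


lemma p_mul_norm_le {a b : ℚ_[p]} (ha : a ≠ 0) (h : ‖a‖ < ‖b‖) : (p : ℝ) * ‖a‖ ≤ ‖b‖ := by
  have hb : b ≠ 0 := by
    rintro rfl
    simp only [norm_zero] at h
    exact absurd h (not_lt.mpr (norm_nonneg a))
  have hp1 : (1 : ℝ) < p := by exact_mod_cast (Fact.out : p.Prime).one_lt
  rw [Padic.norm_eq_zpow_neg_valuation ha, Padic.norm_eq_zpow_neg_valuation hb] at h ⊢
  have hv : -a.valuation < -b.valuation := (zpow_lt_zpow_iff_right₀ hp1).mp h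
  have hv' : -a.valuation + 1 ≤ -b.valuation := by omega
  calc (p : ℝ) * (p : ℝ) ^ (-a.valuation)
      = (p : ℝ) ^ (-a.valuation + 1) := by
        rw [zpow_add₀ (by positivity : (p:ℝ) ≠ 0), zpow_one]; ring
    _ ≤ (p : ℝ) ^ (-b.valuation) := zpow_le_zpow_right₀ hp1.le hv'

end Stmt16Aux



/-- The Potts–Bethe mapping on `ℚ_[p]` (with total division, so defined everywhere). -/
noncomputable def pottsBethe (p : ℕ) [Fact p.Prime] (q k : ℕ) (θ : ℚ_[p]) : ℚ_[p] → ℚ_[p] :=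
  fun x => ((θ * x + (q : ℚ_[p]) - 1) / (x + θ + (q : ℚ_[p]) - 2)) ^ k

set_option maxHeartbeats 1000000 in
theorem stmt16 (p : ℕ) [Fact p.Prime] (hp : 3 ≤ p) (q k : ℕ) (hq : 1 ≤ q) (hk : 1 ≤ k)
    (θ : ℚ_[p]) (hqk : ‖(q : ℚ_[p])‖ < ‖(k : ℚ_[p])‖) (hθq : ‖θ - 1‖ < ‖(q : ℚ_[p])‖ ^ 2) :
    ∀ x y : ℚ_[p],
      ‖x - (1 - (q : ℚ_[p]) + ((k : ℚ_[p]) - 1) *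
        (1 - (q : ℚ_[p]) / 2 + ((k : ℚ_[p]) - 2) * (q : ℚ_[p]) ^ 2 / (6 * (k : ℚ_[p]))) * (θ - 1))‖
          < ‖(q : ℚ_[p]) * (θ - 1)‖ →
      ‖y - (1 - (q : ℚ_[p]) + ((k : ℚ_[p]) - 1) *
        (1 - (q : ℚ_[p]) / 2 + ((k : ℚ_[p]) - 2) * (q : ℚ_[p]) ^ 2 / (6 * (k : ℚ_[p]))) * (θ - 1))‖
          < ‖(q : ℚ_[p]) * (θ - 1)‖ →
      ‖pottsBethe p q k θ x - pottsBethe p q k θ y‖ * ‖(k : ℚ_[p]) * (θ - 1)‖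
        = ‖(q : ℚ_[p])‖ * ‖x - y‖ := by
  intro x y hx hy
  set Q : ℚ_[p] := (q : ℚ_[p]) with hQ_def
  set K : ℚ_[p] := (k : ℚ_[p]) with hK_def
  set t : ℚ_[p] := θ - 1 with hT
  set E : ℚ_[p] := 1 - Q / 2 + (K - 2) * Q ^ 2 / (6 * K) with hE_def
  set A : ℚ_[p] := (K - 1) * E with hA_def
  -- dispose of the degenerate case t = 0
  by_cases ht0 : t = 0
  · simp only [ht0, mul_zero, norm_zero] at hx
    exact absurd hx (not_lt.mpr (norm_nonneg _))
  have hθt : θ = 1 + t := by rw [hT]; ring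
  have hq0 : Q ≠ 0 := Nat.cast_ne_zero.mpr (by omega)
  have hk0 : K ≠ 0 := Nat.cast_ne_zero.mpr (by omega)
  have hQpos : 0 < ‖Q‖ := norm_pos_iff.mpr hq0
  have hKpos : 0 < ‖K‖ := norm_pos_iff.mpr hk0
  have htpos : 0 < ‖t‖ := norm_pos_iff.mpr ht0
  have hQ1 : ‖Q‖ ≤ 1 := Stmt16Aux.norm_nat_le_one q
  have hK1 : ‖K‖ ≤ 1 := Stmt16Aux.norm_nat_le_one k
  have hppos : (0:ℝ) < p := by positivity
  have hpQK : (p:ℝ) * ‖Q‖ ≤ ‖K‖ := Stmt16Aux.p_mul_norm_le hq0 hqk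
  have hQQ : ‖Q‖^2 ≤ ‖Q‖ := by nlinarith
  have htQ : ‖t‖ < ‖Q‖ := lt_of_lt_of_le hθq hQQ
  have ht1 : ‖t‖ < 1 := lt_of_lt_of_le htQ hQ1
  have hpz : (3:ℤ) ≤ (p:ℤ) := by exact_mod_cast hp
  have h2 : ‖(2:ℚ_[p])‖ = 1 := by
    have hd : ¬ ((p:ℤ) ∣ (2:ℤ)) := by
      intro h
      have := Int.le_of_dvd (by norm_num) h
      omega
    have h1 := (Padic.norm_intCast_lt_one_iff (p := p) (k := 2)).not.mpr hd
    rw [not_lt] at h1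
    have h2' := Padic.norm_int_le_one (p := p) 2
    have hcast : ((2:ℤ) : ℚ_[p]) = (2 : ℚ_[p]) := by push_cast; ring
    rw [hcast] at h1 h2'
    linarith
  have h6 : (p:ℝ)^(-2:ℤ) < ‖(6:ℚ_[p])‖ := by
    have hd : ¬ ((p:ℤ)^2 ∣ (6:ℤ)) := by
      intro h
      have h9 : (9:ℤ) ≤ (p:ℤ)^2 := by nlinarith
      have := Int.le_of_dvd (by norm_num) h
      omega
    have h1 := (Padic.norm_int_le_pow_iff_dvd (p := p) 6 2).not.mpr hd
    rw [not_le] at h1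
    have hcast : ((6:ℤ) : ℚ_[p]) = (6 : ℚ_[p]) := by push_cast; ring
    rw [hcast] at h1
    exact_mod_cast h1
  have h6pos : (0:ℝ) < ‖(6:ℚ_[p])‖ := lt_trans (by positivity) h6
  have hK2 : ‖K - 2‖ ≤ 1 := by
    have := Padic.norm_int_le_one (p := p) ((k:ℤ) - 2)
    push_cast at this
    exact this
  have hK1' : ‖K - 1‖ ≤ 1 := by
    have := Padic.norm_int_le_one (p := p) ((k:ℤ) - 1)
    push_cast at this
    exact this
  have h6' : 1 < (p:ℝ)^2 * ‖(6:ℚ_[p])‖ := by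
    have hz : (p:ℝ)^(-2:ℤ) = ((p:ℝ)^2)⁻¹ := by rw [zpow_neg]; norm_cast
    have hp2 : (0:ℝ) < (p:ℝ)^2 := by positivity
    calc (1:ℝ) = (p:ℝ)^2 * ((p:ℝ)^2)⁻¹ := by field_simp
      _ < (p:ℝ)^2 * ‖(6:ℚ_[p])‖ := by
          apply mul_lt_mul_of_pos_left _ hp2
          rw [← hz]; exact h6
  -- ‖E - 1‖ < ‖K‖
  have hE1 : ‖E - 1‖ < ‖K‖ := by
    have he : E - 1 = (-(Q / 2)) + (K - 2) * Q ^ 2 / (6 * K) := by rw [hE_def]; ring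
    rw [he]
    refine lt_of_le_of_lt (Padic.nonarchimedean _ _) (max_lt ?_ ?_)
    · rw [norm_neg, norm_div, h2, div_one]; exact hqk
    · rw [norm_div, norm_mul, norm_mul, norm_pow]
      rw [div_lt_iff₀ (by positivity)]
      have hsq : ((p:ℝ) * ‖Q‖) * ((p:ℝ) * ‖Q‖) ≤ ‖K‖ * ‖K‖ :=
        mul_le_mul hpQK hpQK (by positivity) (by positivity)
      nlinarith [norm_nonneg (K - 2), sq_nonneg ‖Q‖, mul_pos hQpos hQpos]
  have hE1le : ‖E - 1‖ ≤ 1 := hE1.le.trans hK1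
  have hE : ‖E‖ ≤ 1 := by
    have h := Padic.nonarchimedean (1 : ℚ_[p]) (E - 1)
    rw [show (1:ℚ_[p]) + (E - 1) = E by ring] at h
    exact h.trans (max_le (by simp) hE1le)
  have hA : ‖A‖ ≤ 1 := by
    rw [hA_def, norm_mul]
    calc ‖K - 1‖ * ‖E‖ ≤ 1 * 1 := mul_le_mul hK1' hE (norm_nonneg _) zero_le_one
      _ = 1 := one_mul 1
  have hA1 : ‖A + 1‖ = ‖K‖ := by
    have hid : A + 1 = K + (K - 1) * (E - 1) := by rw [hA_def]; ring
    rw [hid]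
    apply Stmt16Aux.norm_add_eq_left
    rw [norm_mul]
    calc ‖K - 1‖ * ‖E - 1‖ ≤ 1 * ‖E - 1‖ := mul_le_mul_of_nonneg_right hK1' (norm_nonneg _)
      _ = ‖E - 1‖ := one_mul _
      _ < ‖K‖ := hE1
  -- ball facts
  have hball : ∀ z : ℚ_[p], ‖z - (1 - Q + A * t)‖ < ‖Q * t‖ →
      ‖z + θ + Q - 2‖ = ‖K‖ * ‖t‖ ∧ ‖z - 1‖ = ‖Q‖ := by
    intro z hz
    have hδ : ‖z - (1 - Q + A * t)‖ < ‖Q‖ * ‖t‖ := by rwa [norm_mul] at hz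
    constructor
    · have hid : z + θ + Q - 2 = (A + 1) * t + (z - (1 - Q + A * t)) := by
        rw [hθt]; ring
      rw [hid, Stmt16Aux.norm_add_eq_left, norm_mul, hA1]
      rw [norm_mul, hA1]
      calc ‖z - (1 - Q + A * t)‖ < ‖Q‖ * ‖t‖ := hδ
        _ < ‖K‖ * ‖t‖ := mul_lt_mul_of_pos_right hqk htpos
    · have hid : z - 1 = -Q + ((z - (1 - Q + A * t)) + A * t) := by ring
      rw [hid, Stmt16Aux.norm_add_eq_left, norm_neg]
      rw [norm_neg]
      refine lt_of_le_of_lt (Padic.nonarchimedean _ _) (max_lt ?_ ?_)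
      · exact lt_of_lt_of_le hδ (le_of_lt (mul_lt_of_lt_one_right hQpos ht1)) |>.trans_le le_rfl
      · calc ‖A * t‖ ≤ ‖t‖ := by
              rw [norm_mul]; exact mul_le_of_le_one_left (norm_nonneg t) hA
          _ < ‖Q‖ := htQ
  obtain ⟨hDx, hx1⟩ := hball x hx
  obtain ⟨hDy, hy1⟩ := hball y hy
  have hKtpos : (0:ℝ) < ‖K‖ * ‖t‖ := mul_pos hKpos htpos
  have hDx0 : x + θ + Q - 2 ≠ 0 := norm_pos_iff.mp (hDx ▸ hKtpos)
  have hDy0 : y + θ + Q - 2 ≠ 0 := norm_pos_iff.mp (hDy ▸ hKtpos)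
  by_cases hxy : x = y
  · subst hxy
    simp
  set u : ℚ_[p] := t * (x - 1) / (x + θ + Q - 2) with hu_def
  set v : ℚ_[p] := t * (y - 1) / (y + θ + Q - 2) with hv_def
  have hfx : pottsBethe p q k θ x = (1 + u) ^ k := by
    show ((θ * x + Q - 1) / (x + θ + Q - 2)) ^ k = (1 + u) ^ k
    congr 1
    rw [hu_def]
    field_simp
    rw [hθt]
    ring
  have hfy : pottsBethe p q k θ y = (1 + v) ^ k := by
    show ((θ * y + Q - 1) / (y + θ + Q - 2)) ^ k = (1 + v) ^ k
    congr 1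
    rw [hv_def]
    field_simp
    rw [hθt]
    ring
  have huv_eq : u - v = t * (Q + t) * (x - y) / ((x + θ + Q - 2) * (y + θ + Q - 2)) := by
    rw [hu_def, hv_def, div_sub_div _ _ hDx0 hDy0,
      div_eq_div_iff (mul_ne_zero hDx0 hDy0) (mul_ne_zero hDx0 hDy0)]
    rw [hθt]
    ring
  have hQt : ‖Q + t‖ = ‖Q‖ := Stmt16Aux.norm_add_eq_left htQ
  have hQt0 : Q + t ≠ 0 := norm_pos_iff.mp (by rw [hQt]; exact hQpos)
  have hu_norm : ‖u‖ ≤ ‖Q‖ / ‖K‖ := by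
    rw [hu_def, norm_div, norm_mul, hx1, hDx]
    rw [div_le_div_iff₀ hKtpos hKpos]
    ring_nf
    exact le_of_eq (by ring)
  have hv_norm : ‖v‖ ≤ ‖Q‖ / ‖K‖ := by
    rw [hv_def, norm_div, norm_mul, hy1, hDy]
    rw [div_le_div_iff₀ hKtpos hKpos]
    ring_nf
    exact le_of_eq (by ring)
  have hc : (‖Q‖ / ‖K‖) * p ≤ 1 := by
    rw [div_mul_eq_mul_div, div_le_one hKpos]
    calc ‖Q‖ * p = p * ‖Q‖ := by ring
      _ ≤ ‖K‖ := hpQK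
  have hne : u ≠ v := by
    rw [← sub_ne_zero, huv_eq]
    apply div_ne_zero
    · exact mul_ne_zero (mul_ne_zero ht0 hQt0) (sub_ne_zero.mpr hxy)
    · exact mul_ne_zero hDx0 hDy0
  have hmain := Stmt16Aux.binomial_key hp hk hc hu_norm hv_norm hne
  have huvn : ‖u - v‖ = ‖t‖ * ‖Q‖ * ‖x - y‖ / ((‖K‖ * ‖t‖) * (‖K‖ * ‖t‖)) := by
    rw [huv_eq, norm_div, norm_mul, norm_mul, norm_mul, hQt, hDx, hDy]
  rw [hfx, hfy, hmain, huvn, norm_mul]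
  field_simp
  ring
end

section
/- Let p ≥ 3 be a prime, let q, k ≥ 1 be natural numbers and θ ∈ ℚ_p with |q|_p < |k|_p and |θ − 1|_p < |q|_p². Let ξ ∈ ℚ_p be a k-th root of unity with ξ ≠ 1, set x_ξ := 2 − q − θ + q·(θ−1)/(1−ξ) and r := |q·(θ−1)|_p. Then for all x, y in the ball B_r(x_ξ) one has |f(x) − f(y)|_p · |q·(θ−1)|_p = |k|_p · |x − y|_p (i.e. f expands distances on B_r(x_ξ) by the factor |k|_p/(|q|_p·|θ−1|_p)). -/
open Finset

section Helpers


variable {p : ℕ} [Fact p.Prime]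

lemma my_norm_eq_of_sub_lt {x y : ℚ_[p]} (h : ‖x - y‖ < ‖y‖) : ‖x‖ = ‖y‖ := by
  have h1 : ‖x‖ ≤ ‖y‖ := by
    have := Padic.nonarchimedean (x - y) y
    simpa using this.trans (max_le h.le le_rfl)
  rcases h1.lt_or_eq with hlt | heq
  · have := Padic.nonarchimedean (y - x) x
    simp only [sub_add_cancel] at this
    rw [norm_sub_rev] at h
    exact absurd this (not_le.mpr (max_lt h hlt))
  · exact heq

lemma my_norm_add_eq {u v : ℚ_[p]} (h : ‖u‖ < ‖v‖) : ‖u + v‖ = ‖v‖ :=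
  my_norm_eq_of_sub_lt (by simpa using h)

lemma my_norm_sum_le {ι : Type*} {s : Finset ι} {f : ι → ℚ_[p]} {B : ℝ} (hB : 0 ≤ B)
    (h : ∀ i ∈ s, ‖f i‖ ≤ B) : ‖∑ i ∈ s, f i‖ ≤ B := by
  induction s using Finset.cons_induction with
  | empty => simpa using hB
  | cons a s ha ih =>
    rw [Finset.sum_cons]
    refine (Padic.nonarchimedean _ _).trans (max_le (h a (mem_cons_self a s)) ?_)
    exact ih fun i hi => h i (mem_cons.mpr (Or.inr hi))

lemma my_norm_sum_lt {ι : Type*} {s : Finset ι} {f : ι → ℚ_[p]} {B : ℝ} (hB : 0 < B)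
    (h : ∀ i ∈ s, ‖f i‖ < B) : ‖∑ i ∈ s, f i‖ < B := by
  induction s using Finset.cons_induction with
  | empty => simpa using hB
  | cons a s ha ih =>
    rw [Finset.sum_cons]
    refine (Padic.nonarchimedean _ _).trans_lt (max_lt (h a (mem_cons_self a s)) ?_)
    exact ih fun i hi => h i (mem_cons.mpr (Or.inr hi))

lemma my_norm_le_inv_of_lt_one {x : ℚ_[p]} (h : ‖x‖ < 1) : ‖x‖ ≤ (p : ℝ)⁻¹ := by
  have hp1 : (1 : ℝ) < (p : ℝ) := by exact_mod_cast (Fact.out : p.Prime).one_lt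
  rcases eq_or_ne x 0 with rfl | hx
  · simp
  · rw [Padic.norm_eq_zpow_neg_valuation hx] at h ⊢
    have hv : (1 : ℤ) ≤ x.valuation := by
      by_contra hc
      push_neg at hc
      have : (0 : ℤ) ≤ -x.valuation := by omega
      have := one_le_zpow₀ hp1.le this
      linarith
    calc (p : ℝ) ^ (-x.valuation) ≤ (p : ℝ) ^ (-1 : ℤ) := by
          apply zpow_le_zpow_right₀ hp1.le; omega
      _ = (p : ℝ)⁻¹ := by simp




lemma my_aux3 : ∀ i : ℕ, 2 ≤ i → i < 3 ^ (i - 1) := by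
  intro i hi
  induction i with
  | zero => omega
  | succ n ih =>
    rcases Nat.lt_or_ge n 2 with h | h
    · interval_cases n
      · omega
      · norm_num
    · have h1 := ih h
      have h2 : n + 1 - 1 = (n - 1) + 1 := by omega
      rw [h2, pow_succ]
      omega

lemma my_norm_nat_lower (hp : 3 ≤ p) {i : ℕ} (hi : 2 ≤ i) :
    ((p : ℝ)⁻¹) ^ (i - 1) < ‖(i : ℚ_[p])‖ := by
  have hp1 : (1 : ℝ) < (p : ℝ) := by
    have := (Fact.out : p.Prime).one_lt; exact_mod_cast this
  have hi0 : (i : ℚ_[p]) ≠ 0 := Nat.cast_ne_zero.mpr (by omega)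
  rw [Padic.norm_eq_zpow_neg_valuation hi0, Padic.valuation_natCast]
  have hv : padicValNat p i ≤ i - 2 := by
    by_contra hc
    push_neg at hc
    have hdvd : p ^ padicValNat p i ∣ i := pow_padicValNat_dvd
    have h1 : p ^ padicValNat p i ≤ i := Nat.le_of_dvd (by omega) hdvd
    have h2 : 3 ^ (i - 1) ≤ p ^ (i - 1) := Nat.pow_le_pow_left hp _
    have h3 : p ^ (i - 1) ≤ p ^ padicValNat p i :=
      Nat.pow_le_pow_right (by omega) (by omega)
    have := my_aux3 i hi
    omega
  have : ((p : ℝ)⁻¹) ^ (i - 1) = (p : ℝ) ^ (-(i - 1 : ℕ) : ℤ) := by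
    rw [zpow_neg, inv_pow, zpow_natCast]
  rw [this]
  apply zpow_lt_zpow_right₀ hp1
  omega

lemma my_norm_choose_mul {k i : ℕ} (hk : 1 ≤ k) (hi : 1 ≤ i) :
    ‖(k.choose i : ℚ_[p])‖ * ‖(i : ℚ_[p])‖ ≤ ‖(k : ℚ_[p])‖ := by
  have hid : k * (k - 1).choose (i - 1) = k.choose i * i := by
    have := Nat.add_one_mul_choose_eq (k - 1) (i - 1)
    have h1 : (k - 1) + 1 = k := by omega
    have h2 : (i - 1) + 1 = i := by omega
    rw [h1, h2] at this
    exact this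
  have hcast : (k : ℚ_[p]) * ((k - 1).choose (i - 1) : ℚ_[p]) = (k.choose i : ℚ_[p]) * (i : ℚ_[p]) := by
    exact_mod_cast congrArg (Nat.cast (R := ℚ_[p])) hid
  have hnorm := congrArg norm hcast
  rw [norm_mul, norm_mul] at hnorm
  rw [← hnorm]
  have hle : ‖(((k - 1).choose (i - 1) : ℤ) : ℚ_[p])‖ ≤ 1 := Padic.norm_int_le_one _
  push_cast at hle
  calc ‖(k : ℚ_[p])‖ * ‖((k - 1).choose (i - 1) : ℚ_[p])‖ ≤ ‖(k : ℚ_[p])‖ * 1 := by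
        exact mul_le_mul_of_nonneg_left hle (norm_nonneg _)
    _ = ‖(k : ℚ_[p])‖ := mul_one _

lemma my_key (hp : 3 ≤ p) {k : ℕ} (hk : 1 ≤ k) {a b : ℚ_[p]} (ha : ‖a‖ < 1) (hb : ‖b‖ < 1) :
    ‖(1 + a) ^ k - (1 + b) ^ k‖ = ‖(k : ℚ_[p])‖ * ‖a - b‖ := by
  rcases eq_or_ne a b with rfl | hab
  · simp
  have htne : a - b ≠ 0 := sub_ne_zero.mpr hab
  have htpos : (0 : ℝ) < ‖a - b‖ := norm_pos_iff.mpr htne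
  have hK0 : ((k : ℚ_[p])) ≠ 0 := Nat.cast_ne_zero.mpr (by omega)
  have hKpos : (0 : ℝ) < ‖(k : ℚ_[p])‖ := norm_pos_iff.mpr hK0
  set r : ℝ := max ‖a‖ ‖b‖ with hr
  have hr0 : 0 ≤ r := le_max_of_le_left (norm_nonneg _)
  have hrinv : r ≤ (p : ℝ)⁻¹ :=
    max_le (my_norm_le_inv_of_lt_one ha) (my_norm_le_inv_of_lt_one hb)
  -- expansion
  have hexp : (1 + a) ^ k - (1 + b) ^ k
      = ∑ i ∈ range (k + 1), (a ^ i - b ^ i) * (k.choose i : ℚ_[p]) := by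
    rw [add_comm (1 : ℚ_[p]) a, add_comm (1 : ℚ_[p]) b, add_pow, add_pow, ← Finset.sum_sub_distrib]
    apply Finset.sum_congr rfl
    intro i _
    ring
  -- split
  have hsplit : ∑ i ∈ range (k + 1), (a ^ i - b ^ i) * (k.choose i : ℚ_[p])
      = (a - b) * (k : ℚ_[p]) + ∑ i ∈ Ico 2 (k + 1), (a ^ i - b ^ i) * (k.choose i : ℚ_[p]) := by
    rw [Finset.range_eq_Ico, ← Finset.sum_Ico_consecutive _ (by omega : 0 ≤ 2) (by omega : 2 ≤ k + 1)]
    congr 1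
    rw [show Finset.Ico 0 2 = {0, 1} by rfl]
    simp [Finset.sum_insert, Finset.sum_singleton]
  -- per-term strict bound
  have hterm : ∀ i ∈ Ico 2 (k + 1),
      ‖(a ^ i - b ^ i) * (k.choose i : ℚ_[p])‖ < ‖(a - b) * (k : ℚ_[p])‖ := by
    intro i hi
    rw [Finset.mem_Ico] at hi
    obtain ⟨hi2, hik⟩ := hi
    have hgeom : a ^ i - b ^ i = (∑ j ∈ range i, a ^ j * b ^ (i - 1 - j)) * (a - b) :=
      (geom_sum₂_mul a b i).symm
    have hsum : ‖∑ j ∈ range i, a ^ j * b ^ (i - 1 - j)‖ ≤ r ^ (i - 1) := by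
      apply my_norm_sum_le (by positivity)
      intro j hj
      rw [Finset.mem_range] at hj
      rw [norm_mul, norm_pow, norm_pow]
      calc ‖a‖ ^ j * ‖b‖ ^ (i - 1 - j)
          ≤ r ^ j * r ^ (i - 1 - j) := by
            apply mul_le_mul (pow_le_pow_left₀ (norm_nonneg _) (le_max_left _ _) _)
              (pow_le_pow_left₀ (norm_nonneg _) (le_max_right _ _) _) (by positivity) (by positivity)
        _ = r ^ (i - 1) := by rw [← pow_add]; congr 1; omega
    have h1 : ‖a ^ i - b ^ i‖ ≤ r ^ (i - 1) * ‖a - b‖ := by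
      rw [hgeom, norm_mul]
      exact mul_le_mul_of_nonneg_right hsum (norm_nonneg _)
    have hC0 : ((k.choose i : ℚ_[p])) ≠ 0 :=
      Nat.cast_ne_zero.mpr (Nat.choose_pos (by omega)).ne'
    have hCpos : (0 : ℝ) < ‖(k.choose i : ℚ_[p])‖ := norm_pos_iff.mpr hC0
    have h2 : r ^ (i - 1) < ‖(i : ℚ_[p])‖ :=
      lt_of_le_of_lt (pow_le_pow_left₀ hr0 hrinv _) (my_norm_nat_lower hp hi2)
    have h3 : ‖(k.choose i : ℚ_[p])‖ * r ^ (i - 1) < ‖(k : ℚ_[p])‖ :=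
      lt_of_lt_of_le (by exact (mul_lt_mul_iff_right₀ hCpos).mpr h2) (my_norm_choose_mul hk (by omega))
    calc ‖(a ^ i - b ^ i) * (k.choose i : ℚ_[p])‖
        = ‖a ^ i - b ^ i‖ * ‖(k.choose i : ℚ_[p])‖ := norm_mul _ _
      _ ≤ (r ^ (i - 1) * ‖a - b‖) * ‖(k.choose i : ℚ_[p])‖ :=
          mul_le_mul_of_nonneg_right h1 (norm_nonneg _)
      _ = (‖(k.choose i : ℚ_[p])‖ * r ^ (i - 1)) * ‖a - b‖ := by ring
      _ < ‖(k : ℚ_[p])‖ * ‖a - b‖ := by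
          exact (mul_lt_mul_iff_left₀ htpos).mpr h3
      _ = ‖(a - b) * (k : ℚ_[p])‖ := by rw [norm_mul]; ring
  have hSlt : ‖∑ i ∈ Ico 2 (k + 1), (a ^ i - b ^ i) * (k.choose i : ℚ_[p])‖
      < ‖(a - b) * (k : ℚ_[p])‖ := by
    apply my_norm_sum_lt _ hterm
    rw [norm_mul]
    positivity
  have : ‖(1 + a) ^ k - (1 + b) ^ k‖ = ‖(a - b) * (k : ℚ_[p])‖ := by
    apply my_norm_eq_of_sub_lt
    rw [hexp, hsplit]
    simpa using hSlt
  rw [this, norm_mul]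
  ring

end Helpers

theorem stmt17 (p : ℕ) [Fact p.Prime] (hp : 3 ≤ p) (q k : ℕ) (hq : 1 ≤ q) (hk : 1 ≤ k)
    (θ : ℚ_[p]) (hqk : ‖(q : ℚ_[p])‖ < ‖(k : ℚ_[p])‖) (hθq : ‖θ - 1‖ < ‖(q : ℚ_[p])‖ ^ 2)
    (ξ : ℚ_[p]) (hξ : ξ ^ k = 1) (hξ1 : ξ ≠ 1) :
    ∀ x y : ℚ_[p],
      ‖x - (2 - (q : ℚ_[p]) - θ + (q : ℚ_[p]) * (θ - 1) / (1 - ξ))‖ < ‖(q : ℚ_[p]) * (θ - 1)‖ →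
      ‖y - (2 - (q : ℚ_[p]) - θ + (q : ℚ_[p]) * (θ - 1) / (1 - ξ))‖ < ‖(q : ℚ_[p]) * (θ - 1)‖ →
      ‖pottsBethe p q k θ x - pottsBethe p q k θ y‖ * ‖(q : ℚ_[p]) * (θ - 1)‖
        = ‖(k : ℚ_[p])‖ * ‖x - y‖ := by
  intro x y hx hy
  by_cases hθ : θ = 1
  · rw [hθ] at hx
    simp only [sub_self, mul_zero, norm_zero] at hx
    exact absurd hx (norm_nonneg _).not_gt
  -- setup
  have hA : θ - 1 ≠ 0 := sub_ne_zero.mpr hθ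
  have hQ0 : (q : ℚ_[p]) ≠ 0 := Nat.cast_ne_zero.mpr (by omega)
  have hK0 : (k : ℚ_[p]) ≠ 0 := Nat.cast_ne_zero.mpr (by omega)
  have hεpos : (0 : ℝ) < ‖(q : ℚ_[p])‖ := norm_pos_iff.mpr hQ0
  have hδpos : (0 : ℝ) < ‖θ - 1‖ := norm_pos_iff.mpr hA
  have hQ1 : ‖(q : ℚ_[p])‖ ≤ 1 := by
    have := Padic.norm_int_le_one (p := p) (q : ℤ)
    push_cast at this; exact this
  have hδε : ‖θ - 1‖ < ‖(q : ℚ_[p])‖ := by nlinarith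
  -- ξ facts
  have hξ0 : ξ ≠ 0 := by rintro rfl; simp [zero_pow (by omega : k ≠ 0)] at hξ
  have hξn : ‖ξ‖ = 1 := by
    have h1 : ‖ξ‖ ^ k = 1 := by rw [← norm_pow, hξ, norm_one]
    rcases lt_trichotomy ‖ξ‖ 1 with h | h | h
    · have h2 : ‖ξ‖ ^ k < 1 := pow_lt_one₀ (norm_nonneg ξ) h (by omega)
      rw [h1] at h2; exact absurd h2 (lt_irrefl _)
    · exact h
    · have h2 : (1:ℝ) < ‖ξ‖ ^ k := one_lt_pow₀ h (by omega)
      rw [h1] at h2; exact absurd h2 (lt_irrefl _)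
  have hu0 : (1 : ℚ_[p]) - ξ ≠ 0 := sub_ne_zero.mpr (Ne.symm hξ1)
  have hun : ‖(1 : ℚ_[p]) - ξ‖ = 1 := by
    refine le_antisymm ?_ ?_
    · have := Padic.nonarchimedean (1 : ℚ_[p]) (-ξ)
      simpa [hξn, sub_eq_add_neg] using this
    · by_contra hc
      push_neg at hc
      have hlt : ‖ξ - 1‖ < 1 := by rw [norm_sub_rev]; exact hc
      have := my_key hp hk (a := ξ - 1) (b := 0) hlt (by simp)
      simp only [add_sub_cancel, add_zero, one_pow, hξ, sub_self, norm_zero, sub_zero] at this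
      have hξ1' : ξ - 1 ≠ 0 := sub_ne_zero.mpr hξ1
      have := this.symm
      rw [mul_eq_zero] at this
      rcases this with h | h
      · exact absurd h (norm_pos_iff.mpr hK0).ne'
      · exact absurd h (norm_pos_iff.mpr hξ1').ne'
  -- abbreviations
  set Q : ℚ_[p] := (q : ℚ_[p]) with hQdef
  set s : ℚ_[p] := Q * (θ - 1) / (1 - ξ) with hsdef
  set c : ℚ_[p] := 2 - Q - θ + s with hcdef
  have hsn : ‖s‖ = ‖Q * (θ - 1)‖ := by
    rw [hsdef, norm_div, hun, div_one]
  have hrpos : (0 : ℝ) < ‖Q * (θ - 1)‖ := norm_pos_iff.mpr (mul_ne_zero hQ0 hA)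
  have hs0 : s ≠ 0 := by rw [← norm_pos_iff, hsn]; exact hrpos
  -- denominators
  have hden : ∀ z : ℚ_[p], ‖z - c‖ < ‖Q * (θ - 1)‖ →
      ‖z + θ + Q - 2‖ = ‖Q * (θ - 1)‖ ∧ z + θ + Q - 2 ≠ 0 := by
    intro z hz
    have heq : z + θ + Q - 2 = (z - c) + s := by rw [hcdef]; ring
    have h1 : ‖z + θ + Q - 2‖ = ‖Q * (θ - 1)‖ := by
      rw [heq, my_norm_add_eq (by rw [hsn]; exact hz), hsn]
    exact ⟨h1, by rw [← norm_pos_iff, h1]; exact hrpos⟩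
  obtain ⟨hDx, hDx0⟩ := hden x hx
  obtain ⟨hDy, hDy0⟩ := hden y hy
  have hcc : ‖c - c‖ < ‖Q * (θ - 1)‖ := by simpa using hrpos
  obtain ⟨hDc, hDc0⟩ := hden c hcc
  -- the Möbius part g
  set g : ℚ_[p] → ℚ_[p] := fun z => (θ * z + Q - 1) / (z + θ + Q - 2) with hgdef
  have hgdiff : ∀ z w : ℚ_[p], z + θ + Q - 2 ≠ 0 → w + θ + Q - 2 ≠ 0 →
      g z - g w = ((z - w) * (θ - 1) * ((θ - 1) + Q)) / ((z + θ + Q - 2) * (w + θ + Q - 2)) := by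
    intro z w hz hw
    rw [hgdef]
    field_simp
    ring
  have hAQ : ‖(θ - 1) + Q‖ = ‖Q‖ := my_norm_add_eq hδε
  have hgnorm : ∀ z w : ℚ_[p], ‖z + θ + Q - 2‖ = ‖Q * (θ - 1)‖ → z + θ + Q - 2 ≠ 0 →
      ‖w + θ + Q - 2‖ = ‖Q * (θ - 1)‖ → w + θ + Q - 2 ≠ 0 →
      ‖g z - g w‖ = ‖z - w‖ / ‖Q * (θ - 1)‖ := by
    intro z w h1 h2 h3 h4
    rw [hgdiff z w h2 h4, norm_div, norm_mul, norm_mul, norm_mul, h1, h3, hAQ, norm_mul]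
    field_simp
  -- g c is close to ξ
  have hgc : g c - ξ = (θ - 1) * (Q + ξ - 1) / Q := by
    rw [hgdef]
    simp only
    rw [hcdef, hsdef]
    have hQA : Q * (θ - 1) ≠ 0 := mul_ne_zero hQ0 hA
    have hs0' : Q * (θ - 1) / (1 - ξ) ≠ 0 := div_ne_zero hQA hu0
    have hdc : (2 - Q - θ + Q * (θ - 1) / (1 - ξ)) + θ + Q - 2 = Q * (θ - 1) / (1 - ξ) := by
      ring
    rw [hdc, div_sub' hs0', div_eq_div_iff hs0' hQ0]
    field_simp
    ring
  have hgcn : ‖g c - ξ‖ < 1 := by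
    rw [hgc, norm_div, norm_mul]
    have h1 : ‖Q + ξ - 1‖ ≤ 1 := by
      have h2 : Q + ξ - 1 = Q + -(1 - ξ) := by ring
      rw [h2]
      refine (Padic.nonarchimedean _ _).trans ?_
      rw [norm_neg, hun]
      exact max_le hQ1 le_rfl
    calc ‖θ - 1‖ * ‖Q + ξ - 1‖ / ‖Q‖ ≤ ‖θ - 1‖ * 1 / ‖Q‖ := by gcongr
      _ = ‖θ - 1‖ / ‖Q‖ := by ring
      _ < ‖Q‖ ^ 2 / ‖Q‖ := by gcongr
      _ ≤ 1 := by
          rw [sq]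
          rw [mul_div_assoc, div_self hεpos.ne', mul_one]
          exact hQ1
  -- g x and g y are close to ξ
  have hclose : ∀ z : ℚ_[p], ‖z - c‖ < ‖Q * (θ - 1)‖ → ‖z + θ + Q - 2‖ = ‖Q * (θ - 1)‖ →
      z + θ + Q - 2 ≠ 0 → ‖g z - ξ‖ < 1 := by
    intro z hz h1 h2
    have hzc : ‖g z - g c‖ < 1 := by
      rw [hgnorm z c h1 h2 hDc hDc0]
      rw [div_lt_one hrpos]
      exact hz
    have hdecomp : g z - ξ = (g z - g c) + (g c - ξ) := by ring
    rw [hdecomp]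
    exact (Padic.nonarchimedean _ _).trans_lt (max_lt hzc hgcn)
  have hgx : ‖g x - ξ‖ < 1 := hclose x hx hDx hDx0
  have hgy : ‖g y - ξ‖ < 1 := hclose y hy hDy hDy0
  -- apply the key lemma
  set a : ℚ_[p] := g x / ξ - 1 with hadef
  set b : ℚ_[p] := g y / ξ - 1 with hbdef
  have ha : ‖a‖ < 1 := by
    have h1 : a = (g x - ξ) / ξ := by rw [hadef]; field_simp
    rw [h1, norm_div, hξn, div_one]
    exact hgx
  have hb : ‖b‖ < 1 := by
    have h1 : b = (g y - ξ) / ξ := by rw [hbdef]; field_simp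
    rw [h1, norm_div, hξn, div_one]
    exact hgy
  have hkey := my_key hp hk ha hb
  have hpx : (1 + a) ^ k = g x ^ k := by
    have h1 : 1 + a = g x / ξ := by rw [hadef]; ring
    rw [h1, div_pow, hξ, div_one]
  have hpy : (1 + b) ^ k = g y ^ k := by
    have h1 : 1 + b = g y / ξ := by rw [hbdef]; ring
    rw [h1, div_pow, hξ, div_one]
  have hab : ‖a - b‖ = ‖g x - g y‖ := by
    have h1 : a - b = (g x - g y) / ξ := by rw [hadef, hbdef]; ring
    rw [h1, norm_div, hξn, div_one]
  rw [hpx, hpy, hab] at hkey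
  have hfx : pottsBethe p q k θ x = g x ^ k := rfl
  have hfy : pottsBethe p q k θ y = g y ^ k := rfl
  rw [hfx, hfy, hkey, hgnorm x y hDx hDx0 hDy hDy0]
  field_simp
end

section
/- Let p ≥ 3 be a prime, let q, k ≥ 1 be natural numbers and θ ∈ ℚ_p with |q|_p < |k|_p, |q|_p < 1, and |θ − 1|_p < |q|_p². Then the polynomial F(x) = x^k − 1 + q + (θ − 1)·∑_{j=1}^{k−1} x^{k−j} has exactly one root in 𝓔_p. -/
variable {p : ℕ} [Fact p.Prime]

-- helper: strict norm inequality drops by factor p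
lemma aux_norm_lt (x y : ℚ_[p]) (h : ‖x‖ < ‖y‖) : ‖x‖ ≤ (p:ℝ)⁻¹ * ‖y‖ := by
  rcases eq_or_ne y 0 with rfl | hy
  · simp at h; linarith [norm_nonneg x]
  rcases eq_or_ne x 0 with rfl | hx
  · simp only [norm_zero]; positivity
  rw [Padic.norm_eq_zpow_neg_valuation hx, Padic.norm_eq_zpow_neg_valuation hy] at *
  have hp1 : (1:ℝ) < p := by exact_mod_cast (Fact.out : p.Prime).one_lt
  have : -x.valuation < -y.valuation := by
    exact (zpow_lt_zpow_iff_right₀ hp1).mp h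
  have h2 : -x.valuation ≤ -y.valuation - 1 := by omega
  calc (p:ℝ) ^ (-x.valuation) ≤ (p:ℝ) ^ (-y.valuation - 1) := by
        apply zpow_le_zpow_right₀ (le_of_lt hp1) h2
    _ = (p:ℝ)⁻¹ * (p:ℝ) ^ (-y.valuation) := by
        rw [zpow_sub₀ (by positivity), zpow_one]; ring

lemma aux_norm_one {z : ℚ_[p]} (h : ‖z - 1‖ < 1) : ‖z‖ = 1 := by
  have : z = (z - 1) + 1 := by ring
  rw [this, Padic.add_eq_max_of_ne (by simpa using h.ne)]
  simp [max_eq_right h.le]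

lemma aux_nat_norm_one {n : ℕ} (h : ¬ p ∣ n) : ‖(n : ℚ_[p])‖ = 1 := by
  have h1 : ‖((n : ℤ) : ℚ_[p])‖ ≤ 1 := Padic.norm_int_le_one _
  have h2 : ¬ ‖((n : ℤ) : ℚ_[p])‖ < 1 := by
    rw [Padic.norm_intCast_lt_one_iff]
    exact_mod_cast h
  push_cast at h1 h2
  linarith [lt_or_eq_of_le h1]

lemma aux_nat_norm_le {n : ℕ} (h : p ∣ n) (hn : n ≠ 0) : ‖(n : ℚ_[p])‖ ≤ (p:ℝ)⁻¹ := by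
  obtain ⟨m, rfl⟩ := h
  have : ((p * m : ℕ) : ℚ_[p]) = (p : ℚ_[p]) * m := by push_cast; ring
  rw [this, norm_mul, Padic.norm_p]
  have : ‖(m : ℚ_[p])‖ ≤ 1 := by
    have := Padic.norm_int_le_one (p := p) (m : ℤ); push_cast at this; exact this
  have hp0 : (0:ℝ) < (p:ℝ)⁻¹ := by
    have : (0:ℝ) < p := by exact_mod_cast (Fact.out : p.Prime).pos
    positivity
  nlinarith

lemma aux_pow_sub_one {z : ℚ_[p]} (hz : ‖z‖ ≤ 1) (i : ℕ) : ‖z ^ i - 1‖ ≤ ‖z - 1‖ := by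
  have h : z ^ i - 1 = (∑ j ∈ Finset.range i, z ^ j) * (z - 1) := (geom_sum_mul z i).symm
  rw [h, norm_mul]
  have : ‖∑ j ∈ Finset.range i, z ^ j‖ ≤ 1 := by
    apply IsUltrametricDist.norm_sum_le_of_forall_le_of_nonneg zero_le_one
    intro j _
    rw [norm_pow]
    exact pow_le_one₀ (norm_nonneg z) hz
  nlinarith [norm_nonneg (z - 1)]

-- Lemma P: key binomial estimate
lemma aux_P (hp : 3 ≤ p) {t : ℚ_[p]} (ht : ‖t‖ ≤ (p:ℝ)⁻¹) :
    ‖(1 + t) ^ p - 1 - p * t‖ ≤ ‖t‖ ^ 2 * (p:ℝ)⁻¹ := by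
  have hpR : (1:ℝ) < p := by exact_mod_cast (Fact.out : p.Prime).one_lt
  have hpinv : (0:ℝ) < (p:ℝ)⁻¹ := by positivity
  have htlt : ‖t‖ ≤ 1 := ht.trans (by rw [inv_le_one_iff₀]; right; linarith)
  have hexp : (1 + t) ^ p = ∑ j ∈ Finset.range (p + 1), t ^ j * (p.choose j : ℚ_[p]) := by
    rw [add_comm 1 t, add_pow]
    simp
  have hsplit : (1 + t) ^ p - 1 - p * t
      = ∑ j ∈ Finset.Ico 2 (p + 1), t ^ j * (p.choose j : ℚ_[p]) := by
    rw [hexp, Finset.range_eq_Ico, Finset.sum_eq_sum_Ico_succ_bot (by omega),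
      Finset.sum_eq_sum_Ico_succ_bot (by omega)]
    simp only [pow_zero, Nat.choose_zero_right, Nat.cast_one, mul_one, pow_one,
      Nat.choose_one_right]
    rw [Nat.choose_one_right]
    ring
  rw [hsplit]
  apply IsUltrametricDist.norm_sum_le_of_forall_le_of_nonneg (by positivity)
  intro j hj
  rw [Finset.mem_Ico] at hj
  obtain ⟨hj2, hjp⟩ := hj
  rw [norm_mul, norm_pow]
  rcases lt_or_eq_of_le (by omega : j ≤ p) with hlt | heq
  · have hdvd : p ∣ p.choose j := (Fact.out : p.Prime).dvd_choose_self (by omega) hlt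
    have hc : ‖(p.choose j : ℚ_[p])‖ ≤ (p:ℝ)⁻¹ := by
      obtain ⟨m, hm⟩ := hdvd
      rw [hm]
      push_cast
      rw [norm_mul, Padic.norm_p]
      have hm1 : ‖(m : ℚ_[p])‖ ≤ 1 := by
        have := Padic.norm_int_le_one (p := p) (m : ℤ); push_cast at this; exact this
      nlinarith
    have hpow : ‖t‖ ^ j ≤ ‖t‖ ^ 2 := pow_le_pow_of_le_one (norm_nonneg t) htlt hj2
    exact mul_le_mul hpow hc (norm_nonneg _) (by positivity)
  · rw [heq]
    simp only [Nat.choose_self, Nat.cast_one, norm_one, mul_one]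
    have h3 : ‖t‖ ^ p ≤ ‖t‖ ^ 3 := pow_le_pow_of_le_one (norm_nonneg t) htlt (by omega)
    have h4 : ‖t‖ ^ 3 ≤ ‖t‖ ^ 2 * (p:ℝ)⁻¹ := by
      have : ‖t‖ ^ 3 = ‖t‖ ^ 2 * ‖t‖ := by ring
      rw [this]
      exact mul_le_mul_of_nonneg_left ht (by positivity)
    linarith

-- L1
lemma aux_L1 (hp : 3 ≤ p) {z : ℚ_[p]} (hz : ‖z - 1‖ ≤ (p:ℝ)⁻¹) :
    ‖z ^ p - 1‖ = (p:ℝ)⁻¹ * ‖z - 1‖ := by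
  have hz1 : z = 1 + (z - 1) := by ring
  rcases eq_or_ne (z - 1) 0 with h0 | h0
  · have : z = 1 := by linear_combination h0
    simp [this]
  have htpos : 0 < ‖z - 1‖ := norm_pos_iff.mpr h0
  have hP : ‖z ^ p - 1 - p * (z - 1)‖ ≤ ‖z - 1‖ ^ 2 * (p:ℝ)⁻¹ := by
    have := aux_P hp hz
    rwa [← hz1] at this
  have hpR : (1:ℝ) < p := by exact_mod_cast (Fact.out : p.Prime).one_lt
  have hpinv : (0:ℝ) < (p:ℝ)⁻¹ := by positivity
  have htlt1 : ‖z - 1‖ < 1 := lt_of_le_of_lt hz (by rw [inv_lt_one_iff₀]; right; linarith)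
  have hlt : ‖z ^ p - 1 - p * (z - 1)‖ < ‖(p:ℚ_[p]) * (z - 1)‖ := by
    rw [norm_mul, Padic.norm_p]
    have hsq : ‖z - 1‖ ^ 2 < ‖z - 1‖ := by nlinarith
    calc ‖z ^ p - 1 - p * (z - 1)‖ ≤ ‖z - 1‖ ^ 2 * (p:ℝ)⁻¹ := hP
      _ < ‖z - 1‖ * (p:ℝ)⁻¹ := by exact mul_lt_mul_of_pos_right hsq hpinv
      _ = (p:ℝ)⁻¹ * ‖z - 1‖ := by ring
  have hre : z ^ p - 1 = (z ^ p - 1 - p * (z - 1)) + p * (z - 1) := by ring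
  rw [hre, Padic.add_eq_max_of_ne hlt.ne, max_eq_right hlt.le, norm_mul, Padic.norm_p]
-- L2 : coprime exponent is an isometry
lemma aux_L2 {n : ℕ} (hn : ¬ p ∣ n) {z : ℚ_[p]} (hz : ‖z - 1‖ ≤ (p:ℝ)⁻¹) :
    ‖z ^ n - 1‖ = ‖z - 1‖ := by
  have hpR : (1:ℝ) < p := by exact_mod_cast (Fact.out : p.Prime).one_lt
  have hz1 : ‖z‖ ≤ 1 := by
    have hlt : ‖z - 1‖ < 1 := lt_of_le_of_lt hz (by rw [inv_lt_one_iff₀]; right; linarith)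
    have : z = (z - 1) + 1 := by ring
    rw [this, Padic.add_eq_max_of_ne (by simpa using hlt.ne)]
    simp [max_eq_right hlt.le]
  have hgeo : z ^ n - 1 = (∑ j ∈ Finset.range n, z ^ j) * (z - 1) := (geom_sum_mul z n).symm
  have hsum : ‖∑ j ∈ Finset.range n, z ^ j‖ = 1 := by
    have hd : (∑ j ∈ Finset.range n, z ^ j) = (n : ℚ_[p]) + ∑ j ∈ Finset.range n, (z ^ j - 1) := by
      rw [Finset.sum_sub_distrib]
      simp
    have hsmall : ‖∑ j ∈ Finset.range n, (z ^ j - 1)‖ < 1 := by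
      have : ‖∑ j ∈ Finset.range n, (z ^ j - 1)‖ ≤ (p:ℝ)⁻¹ := by
        apply IsUltrametricDist.norm_sum_le_of_forall_le_of_nonneg (by positivity)
        intro j _
        exact (aux_pow_sub_one hz1 j).trans hz
      exact lt_of_le_of_lt this (by rw [inv_lt_one_iff₀]; right; linarith)
    have hn1 : ‖(n : ℚ_[p])‖ = 1 := aux_nat_norm_one hn
    rw [hd, Padic.add_eq_max_of_ne (by rw [hn1]; exact (hsmall.ne).symm), hn1]
    rw [max_eq_left (by linarith)]
  rw [hgeo, norm_mul, hsum, one_mul]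

-- L3 : general isometry  ‖z^k - 1‖ = ‖k‖ ‖z-1‖
lemma aux_L3 (hp : 3 ≤ p) : ∀ (k : ℕ) {z : ℚ_[p]}, ‖z - 1‖ ≤ (p:ℝ)⁻¹ →
    ‖z ^ k - 1‖ = ‖(k : ℚ_[p])‖ * ‖z - 1‖ := by
  intro k
  induction k using Nat.strong_induction_on with
  | _ k ih =>
    intro z hz
    rcases Nat.eq_zero_or_pos k with rfl | hk
    · simp
    by_cases hdvd : p ∣ k
    · obtain ⟨m, rfl⟩ := hdvd
      have hm0 : m ≠ 0 := by rintro rfl; omega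
      have hmlt : m < p * m := by
        have h1 : 2 * m ≤ p * m := Nat.mul_le_mul_right m (by omega)
        omega
      have hpinv : (0:ℝ) < (p:ℝ)⁻¹ := by positivity
      have hpinv1 : (p:ℝ)⁻¹ ≤ 1 := by
        rw [inv_le_one_iff₀]; right; exact_mod_cast by omega
      have hzp : ‖z ^ p - 1‖ ≤ (p:ℝ)⁻¹ := by
        rw [aux_L1 hp hz]
        nlinarith [norm_nonneg (z - 1)]
      have hstep : ‖z ^ (p * m) - 1‖ = ‖(m : ℚ_[p])‖ * ‖z ^ p - 1‖ := by
        rw [pow_mul]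
        exact ih m hmlt hzp
      have hcast : ((p * m : ℕ) : ℚ_[p]) = (p : ℚ_[p]) * (m : ℚ_[p]) := by push_cast; ring
      rw [hstep, aux_L1 hp hz, hcast, norm_mul, Padic.norm_p]
      ring
    · rw [aux_L2 hdvd hz, aux_nat_norm_one hdvd, one_mul]

-- L4 : two-point version
lemma aux_L4 (hp : 3 ≤ p) (k : ℕ) {x y : ℚ_[p]} (hx : ‖x - 1‖ ≤ (p:ℝ)⁻¹)
    (hy : ‖y - 1‖ ≤ (p:ℝ)⁻¹) : ‖x ^ k - y ^ k‖ = ‖(k : ℚ_[p])‖ * ‖x - y‖ := by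
  have hpR : (1:ℝ) < p := by exact_mod_cast (Fact.out : p.Prime).one_lt
  have hylt : ‖y - 1‖ < 1 := lt_of_le_of_lt hy (by rw [inv_lt_one_iff₀]; right; linarith)
  have hy1 : ‖y‖ = 1 := aux_norm_one hylt
  have hy0 : y ≠ 0 := by intro h; rw [h] at hy1; simp at hy1
  set z : ℚ_[p] := x / y with hzdef
  have hz1 : z - 1 = (x - y) / y := by rw [hzdef]; field_simp
  have hznorm : ‖z - 1‖ = ‖x - y‖ := by rw [hz1, norm_div, hy1, div_one]
  have hzball : ‖z - 1‖ ≤ (p:ℝ)⁻¹ := by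
    rw [hznorm]
    have : x - y = (x - 1) - (y - 1) := by ring
    rw [this]
    have hmax := IsUltrametricDist.norm_add_le_max (x - 1) (-(y - 1))
    rw [norm_neg] at hmax
    have he : (x - 1) + (-(y - 1)) = (x - 1) - (y - 1) := by ring
    rw [he] at hmax
    exact hmax.trans (max_le hx hy)
  have hkey : ‖z ^ k - 1‖ = ‖(k : ℚ_[p])‖ * ‖z - 1‖ := aux_L3 hp k hzball
  have hzk : z ^ k - 1 = (x ^ k - y ^ k) / y ^ k := by
    rw [hzdef, div_pow]
    field_simp
  rw [hzk, norm_div, norm_pow, hy1, one_pow, div_one] at hkey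
  rw [hkey, hznorm]

-- Hensel wrapper for x^n = c
lemma aux_root (n : ℕ) (c a : ℚ_[p]) (hc : ‖c‖ ≤ 1) (ha : ‖a‖ ≤ 1)
    (h : ‖a ^ n - c‖ < (‖(n : ℚ_[p])‖ * ‖a‖ ^ (n - 1)) ^ 2) :
    ∃ z : ℚ_[p], ‖z‖ ≤ 1 ∧ ‖z - a‖ < ‖(n : ℚ_[p])‖ * ‖a‖ ^ (n - 1) ∧ z ^ n = c := by
  set cz : ℤ_[p] := ⟨c, hc⟩ with hc'
  set az : ℤ_[p] := ⟨a, ha⟩ with ha'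
  set F : Polynomial ℤ_[p] := Polynomial.X ^ n - Polynomial.C cz with hF
  have heval : ∀ z : ℤ_[p], F.eval z = z ^ n - cz := by
    intro z; simp [hF]
  have hder : F.derivative = Polynomial.C (n : ℤ_[p]) * Polynomial.X ^ (n - 1) := by
    simp [hF, Polynomial.derivative_X_pow]
  have hdeval : ∀ z : ℤ_[p], F.derivative.eval z = (n : ℤ_[p]) * z ^ (n - 1) := by
    intro z; simp [hder]
  have hnorm1 : ‖F.eval az‖ = ‖a ^ n - c‖ := by
    rw [heval, PadicInt.norm_def]
    push_cast
    rfl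
  have hnorm2 : ‖F.derivative.eval az‖ = ‖(n : ℚ_[p])‖ * ‖a‖ ^ (n - 1) := by
    rw [hdeval, PadicInt.norm_def]
    push_cast
    rw [norm_mul, norm_pow]
  have hnorm : ‖F.eval az‖ < ‖F.derivative.eval az‖ ^ 2 := by
    rw [hnorm1, hnorm2]; exact h
  obtain ⟨z, hz1, hz2, _, _⟩ := hensels_lemma hnorm
  refine ⟨(z : ℚ_[p]), z.2, ?_, ?_⟩
  · have : ‖z - az‖ = ‖(z : ℚ_[p]) - a‖ := by rw [PadicInt.norm_def]; rfl
    rw [Polynomial.coe_aeval_eq_eval, this, hnorm2] at hz2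
    exact hz2
  · have he : ((F.eval z : ℤ_[p]) : ℚ_[p]) = (z : ℚ_[p]) ^ n - c := by
      rw [heval]; push_cast; rfl
    rw [Polynomial.coe_aeval_eq_eval] at hz1; rw [hz1] at he
    simp only [PadicInt.coe_zero] at he
    exact sub_eq_zero.mp he.symm

lemma aux_nat_le1 (n : ℕ) : ‖(n : ℚ_[p])‖ ≤ 1 := by
  have := Padic.norm_int_le_one (p := p) (n : ℤ)
  push_cast at this
  exact this

lemma aux_E0 {n : ℕ} (hn : ¬ p ∣ n) {c : ℚ_[p]} (hc : ‖c - 1‖ ≤ (p:ℝ)⁻¹) :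
    ∃ z : ℚ_[p], ‖z - 1‖ ≤ (p:ℝ)⁻¹ ∧ z ^ n = c := by
  have hpR : (1:ℝ) < p := by exact_mod_cast (Fact.out : p.Prime).one_lt
  have hc1 : ‖c - 1‖ < 1 := lt_of_le_of_lt hc (by rw [inv_lt_one_iff₀]; right; linarith)
  have hcle : ‖c‖ ≤ 1 := (aux_norm_one hc1).le
  have hroot := aux_root n c 1 hcle (by simp)
  rw [one_pow, norm_one, one_pow, aux_nat_norm_one hn] at hroot
  obtain ⟨z, _, hz2, hz3⟩ := hroot (by
    rw [norm_sub_rev] at hc1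
    simpa using hc1)
  refine ⟨z, ?_, hz3⟩
  rw [mul_one] at hz2
  have := aux_norm_lt (z - 1) 1 (by simpa using hz2)
  simpa using this

lemma aux_Ep (hp : 3 ≤ p) {c : ℚ_[p]} (hc : ‖c - 1‖ ≤ (p:ℝ)⁻¹ ^ 2) :
    ∃ z : ℚ_[p], ‖z - 1‖ ≤ (p:ℝ)⁻¹ ∧ z ^ p = c := by
  have hpR : (1:ℝ) < p := by exact_mod_cast (Fact.out : p.Prime).one_lt
  have hpinv : (0:ℝ) < (p:ℝ)⁻¹ := by positivity
  have hpinv1 : (p:ℝ)⁻¹ < 1 := by rw [inv_lt_one_iff₀]; right; linarith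
  have hp0 : (p : ℚ_[p]) ≠ 0 := by
    exact_mod_cast Nat.cast_ne_zero.mpr (by omega : p ≠ 0)
  set s : ℚ_[p] := (c - 1) / p with hs
  have hsnorm : ‖s‖ = ‖c - 1‖ * p := by
    rw [hs, norm_div, Padic.norm_p, div_eq_mul_inv, inv_inv]
  have hsle : ‖s‖ ≤ (p:ℝ)⁻¹ := by
    rw [hsnorm]
    calc ‖c - 1‖ * p ≤ (p:ℝ)⁻¹ ^ 2 * p := by nlinarith
      _ = (p:ℝ)⁻¹ := by field_simp
  set a : ℚ_[p] := 1 + s with ha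
  have ha1 : ‖a - 1‖ = ‖s‖ := by rw [ha]; ring_nf
  have hanorm : ‖a‖ = 1 := aux_norm_one (by rw [ha1]; linarith)
  have hcs : c = 1 + p * s := by
    rw [hs]
    field_simp
    ring
  have hkey : ‖a ^ p - c‖ ≤ ‖s‖ ^ 2 * (p:ℝ)⁻¹ := by
    have : a ^ p - c = (1 + s) ^ p - 1 - p * s := by rw [ha, hcs]; ring
    rw [this]
    exact aux_P hp hsle
  have hclt : ‖c - 1‖ < 1 := by nlinarith
  have hcle : ‖c‖ ≤ 1 := (aux_norm_one hclt).le
  have hlt : ‖a ^ p - c‖ < (‖((p:ℕ) : ℚ_[p])‖ * ‖a‖ ^ (p - 1)) ^ 2 := by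
    have h1 : ‖((p:ℕ) : ℚ_[p])‖ = (p:ℝ)⁻¹ := by
      rw [Nat.cast_inj.mpr rfl]
      exact_mod_cast Padic.norm_p (p := p)
    rw [h1, hanorm, one_pow, mul_one]
    have h2 : ‖s‖ ^ 2 ≤ (p:ℝ)⁻¹ ^ 2 := pow_le_pow_left₀ (norm_nonneg s) hsle 2
    calc ‖a ^ p - c‖ ≤ ‖s‖ ^ 2 * (p:ℝ)⁻¹ := hkey
      _ ≤ (p:ℝ)⁻¹ ^ 2 * (p:ℝ)⁻¹ := mul_le_mul_of_nonneg_right h2 hpinv.le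
      _ < (p:ℝ)⁻¹ ^ 2 := mul_lt_of_lt_one_right (by positivity) hpinv1
  obtain ⟨z, _, hz2, hz3⟩ := aux_root p c a hcle hanorm.le hlt
  refine ⟨z, ?_, hz3⟩
  have h1 : ‖((p:ℕ) : ℚ_[p])‖ = (p:ℝ)⁻¹ := by
    exact_mod_cast Padic.norm_p (p := p)
  rw [h1, hanorm, one_pow, mul_one] at hz2
  have hmax := IsUltrametricDist.norm_add_le_max (z - a) (a - 1)
  have he : (z - a) + (a - 1) = z - 1 := by ring
  rw [he] at hmax
  exact hmax.trans (max_le hz2.le (by rw [ha1]; exact hsle))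

lemma aux_E (hp : 3 ≤ p) : ∀ (k : ℕ), k ≠ 0 → ∀ {c : ℚ_[p]},
    ‖c - 1‖ ≤ (p:ℝ)⁻¹ * ‖(k : ℚ_[p])‖ →
    ∃ z : ℚ_[p], ‖z - 1‖ ≤ (p:ℝ)⁻¹ ∧ z ^ k = c := by
  intro k
  induction k using Nat.strong_induction_on with
  | _ k ih =>
    intro hk c hc
    have hpR : (1:ℝ) < p := by exact_mod_cast (Fact.out : p.Prime).one_lt
    have hpinv : (0:ℝ) < (p:ℝ)⁻¹ := by positivity
    by_cases hdvd : p ∣ k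
    · obtain ⟨m, rfl⟩ := hdvd
      have hm0 : m ≠ 0 := by rintro rfl; omega
      have hmlt : m < p * m := by
        have h1 : 2 * m ≤ p * m := Nat.mul_le_mul_right m (by omega)
        omega
      have hcast : ((p * m : ℕ) : ℚ_[p]) = (p : ℚ_[p]) * (m : ℚ_[p]) := by push_cast; ring
      have hknorm : ‖((p * m : ℕ) : ℚ_[p])‖ = (p:ℝ)⁻¹ * ‖(m : ℚ_[p])‖ := by
        rw [hcast, norm_mul, Padic.norm_p]
      have hm1 : ‖(m : ℚ_[p])‖ ≤ 1 := aux_nat_le1 m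
      have hc2 : ‖c - 1‖ ≤ (p:ℝ)⁻¹ ^ 2 := by
        rw [hknorm] at hc
        calc ‖c - 1‖ ≤ (p:ℝ)⁻¹ * ((p:ℝ)⁻¹ * ‖(m : ℚ_[p])‖) := hc
          _ ≤ (p:ℝ)⁻¹ * ((p:ℝ)⁻¹ * 1) := by
              apply mul_le_mul_of_nonneg_left _ hpinv.le
              exact mul_le_mul_of_nonneg_left hm1 hpinv.le
          _ = (p:ℝ)⁻¹ ^ 2 := by ring
      obtain ⟨d, hd1, hd2⟩ := aux_Ep hp hc2
      have hdnorm : ‖d - 1‖ ≤ (p:ℝ)⁻¹ * ‖(m : ℚ_[p])‖ := by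
        have hL1 : ‖d ^ p - 1‖ = (p:ℝ)⁻¹ * ‖d - 1‖ := aux_L1 hp hd1
        rw [hd2] at hL1
        rw [hknorm, hL1] at hc
        exact (mul_le_mul_iff_right₀ hpinv).mp hc
      obtain ⟨x, hx1, hx2⟩ := ih m hmlt hm0 hdnorm
      refine ⟨x, hx1, ?_⟩
      rw [mul_comm, pow_mul, hx2, hd2]
    · rw [aux_nat_norm_one hdvd, mul_one] at hc
      exact aux_E0 hdvd hc

theorem stmt18 (p : ℕ) [Fact p.Prime] (hp : 3 ≤ p) (q k : ℕ) (hq : 1 ≤ q) (hk : 1 ≤ k)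
    (θ : ℚ_[p]) (hqk : ‖(q : ℚ_[p])‖ < ‖(k : ℚ_[p])‖) (hq1 : ‖(q : ℚ_[p])‖ < 1)
    (hθq : ‖θ - 1‖ < ‖(q : ℚ_[p])‖ ^ 2) :
    ∃! x : ℚ_[p], ‖x - 1‖ < 1 ∧
      x ^ k - 1 + (q : ℚ_[p]) + (θ - 1) * ∑ j ∈ Finset.Icc 1 (k - 1), x ^ (k - j) = 0 := by
  have hpR : (1:ℝ) < p := by exact_mod_cast (Fact.out : p.Prime).one_lt
  have hpinv : (0:ℝ) < (p:ℝ)⁻¹ := by positivity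
  have hpinv1 : (p:ℝ)⁻¹ < 1 := by rw [inv_lt_one_iff₀]; right; linarith
  have hq0 : (q : ℚ_[p]) ≠ 0 := Nat.cast_ne_zero.mpr (by omega)
  have hr0 : 0 < ‖(q : ℚ_[p])‖ := norm_pos_iff.mpr hq0
  have hK0 : 0 < ‖(k : ℚ_[p])‖ := lt_trans hr0 hqk
  have hK1 : ‖(k : ℚ_[p])‖ ≤ 1 := aux_nat_le1 k
  have hrsq : ‖(q : ℚ_[p])‖ ^ 2 < ‖(q : ℚ_[p])‖ := by nlinarith
  have hθK : ‖θ - 1‖ < ‖(k : ℚ_[p])‖ := by nlinarith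
  have hrKp : ‖(q : ℚ_[p])‖ ≤ (p:ℝ)⁻¹ * ‖(k : ℚ_[p])‖ := aux_norm_lt _ _ hqk
  have hk0 : k ≠ 0 := by omega
  -- facts about the auxiliary sum
  have hRnorm : ∀ x : ℚ_[p], ‖x - 1‖ ≤ (p:ℝ)⁻¹ →
      ‖∑ j ∈ Finset.Icc 1 (k - 1), x ^ (k - j)‖ ≤ 1 := by
    intro x hx
    have hx1 : ‖x‖ = 1 := aux_norm_one (lt_of_le_of_lt hx hpinv1)
    apply IsUltrametricDist.norm_sum_le_of_forall_le_of_nonneg zero_le_one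
    intro j _
    rw [norm_pow, hx1, one_pow]
  have hRdiff : ∀ x y : ℚ_[p], ‖x - 1‖ ≤ (p:ℝ)⁻¹ → ‖y - 1‖ ≤ (p:ℝ)⁻¹ →
      ‖(∑ j ∈ Finset.Icc 1 (k - 1), x ^ (k - j)) - ∑ j ∈ Finset.Icc 1 (k - 1), y ^ (k - j)‖
        ≤ ‖x - y‖ := by
    intro x y hx hy
    rw [← Finset.sum_sub_distrib]
    apply IsUltrametricDist.norm_sum_le_of_forall_le_of_nonneg (norm_nonneg _)
    intro j _
    rw [aux_L4 hp (k - j) hx hy]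
    calc ‖((k - j : ℕ) : ℚ_[p])‖ * ‖x - y‖ ≤ 1 * ‖x - y‖ :=
          mul_le_mul_of_nonneg_right (aux_nat_le1 _) (norm_nonneg _)
      _ = ‖x - y‖ := one_mul _
  -- the target of the k-th power map
  have hcball : ∀ x : ℚ_[p], ‖x - 1‖ ≤ (p:ℝ)⁻¹ →
      ‖(1 - q - (θ - 1) * ∑ j ∈ Finset.Icc 1 (k - 1), x ^ (k - j)) - 1‖
        ≤ (p:ℝ)⁻¹ * ‖(k : ℚ_[p])‖ := by
    intro x hx
    have he : (1 - (q:ℚ_[p]) - (θ - 1) * ∑ j ∈ Finset.Icc 1 (k - 1), x ^ (k - j)) - 1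
        = -((q:ℚ_[p]) + (θ - 1) * ∑ j ∈ Finset.Icc 1 (k - 1), x ^ (k - j)) := by ring
    rw [he, norm_neg]
    have h2 : ‖(θ - 1) * ∑ j ∈ Finset.Icc 1 (k - 1), x ^ (k - j)‖ ≤ ‖(q : ℚ_[p])‖ := by
      rw [norm_mul]
      have := mul_le_of_le_one_right (norm_nonneg (θ - 1)) (hRnorm x hx)
      nlinarith
    have hmax := IsUltrametricDist.norm_add_le_max ((q:ℚ_[p]))
      ((θ - 1) * ∑ j ∈ Finset.Icc 1 (k - 1), x ^ (k - j))
    exact (hmax.trans (max_le le_rfl h2)).trans hrKp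
  -- existence of the k-th root map
  have exG : ∀ x : ℚ_[p], ‖x - 1‖ ≤ (p:ℝ)⁻¹ → ∃ z : ℚ_[p], ‖z - 1‖ ≤ (p:ℝ)⁻¹ ∧
      z ^ k = 1 - q - (θ - 1) * ∑ j ∈ Finset.Icc 1 (k - 1), x ^ (k - j) := by
    intro x hx
    exact aux_E hp k hk0 (hcball x hx)
  -- the closed ball as a complete space
  have hclosed : IsClosed {x : ℚ_[p] | ‖x - 1‖ ≤ (p:ℝ)⁻¹} := by
    have he : {x : ℚ_[p] | ‖x - 1‖ ≤ (p:ℝ)⁻¹} = Metric.closedBall 1 (p:ℝ)⁻¹ := by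
      ext x; simp [Metric.mem_closedBall, dist_eq_norm]
    rw [he]
    exact Metric.isClosed_closedBall
  haveI : CompleteSpace {x : ℚ_[p] // ‖x - 1‖ ≤ (p:ℝ)⁻¹} := hclosed.completeSpace_coe
  haveI : Nonempty {x : ℚ_[p] // ‖x - 1‖ ≤ (p:ℝ)⁻¹} := ⟨⟨1, by simp [hpinv.le]⟩⟩
  -- the contraction
  set G : {x : ℚ_[p] // ‖x - 1‖ ≤ (p:ℝ)⁻¹} → {x : ℚ_[p] // ‖x - 1‖ ≤ (p:ℝ)⁻¹} :=
    fun x => ⟨(exG x.1 x.2).choose, (exG x.1 x.2).choose_spec.1⟩ with hG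
  have hGpow : ∀ x : {x : ℚ_[p] // ‖x - 1‖ ≤ (p:ℝ)⁻¹},
      (G x : ℚ_[p]) ^ k = 1 - q - (θ - 1) * ∑ j ∈ Finset.Icc 1 (k - 1), (x : ℚ_[p]) ^ (k - j) :=
    fun x => (exG x.1 x.2).choose_spec.2
  have hGdist : ∀ x y : {x : ℚ_[p] // ‖x - 1‖ ≤ (p:ℝ)⁻¹},
      dist (G x) (G y) ≤ (‖θ - 1‖ / ‖(k : ℚ_[p])‖) * dist x y := by
    intro x y
    rw [Subtype.dist_eq, Subtype.dist_eq, dist_eq_norm, dist_eq_norm]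
    have hL4 : ‖(G x : ℚ_[p]) ^ k - (G y : ℚ_[p]) ^ k‖
        = ‖(k : ℚ_[p])‖ * ‖(G x : ℚ_[p]) - (G y : ℚ_[p])‖ :=
      aux_L4 hp k (G x).2 (G y).2
    have hsub : (G x : ℚ_[p]) ^ k - (G y : ℚ_[p]) ^ k
        = (θ - 1) * ((∑ j ∈ Finset.Icc 1 (k - 1), (y : ℚ_[p]) ^ (k - j))
            - ∑ j ∈ Finset.Icc 1 (k - 1), (x : ℚ_[p]) ^ (k - j)) := by
      rw [hGpow x, hGpow y]; ring
    rw [hsub, norm_mul] at hL4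
    have hR := hRdiff (y : ℚ_[p]) (x : ℚ_[p]) y.2 x.2
    rw [norm_sub_rev (y : ℚ_[p]) (x : ℚ_[p])] at hR
    have hle : ‖(k : ℚ_[p])‖ * ‖(G x : ℚ_[p]) - (G y : ℚ_[p])‖ ≤ ‖θ - 1‖ * ‖(x:ℚ_[p]) - y‖ := by
      rw [← hL4]
      exact mul_le_mul_of_nonneg_left hR (norm_nonneg _)
    rw [div_mul_eq_mul_div, le_div_iff₀ hK0]
    nlinarith [norm_nonneg ((G x : ℚ_[p]) - (G y : ℚ_[p]))]
  have hL1 : ‖θ - 1‖ / ‖(k : ℚ_[p])‖ < 1 := by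
    rw [div_lt_one hK0]
    exact hθK
  have hLnn : 0 ≤ ‖θ - 1‖ / ‖(k : ℚ_[p])‖ := by positivity
  have hlip : LipschitzWith (Real.toNNReal (‖θ - 1‖ / ‖(k : ℚ_[p])‖)) G := by
    apply LipschitzWith.of_dist_le_mul
    intro x y
    rw [Real.coe_toNNReal _ hLnn]
    exact hGdist x y
  have hcontr : ContractingWith (Real.toNNReal (‖θ - 1‖ / ‖(k : ℚ_[p])‖)) G := by
    constructor
    · exact_mod_cast Real.toNNReal_lt_one.mpr hL1
    · exact hlip
  set x₀ := hcontr.fixedPoint G with hx₀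
  have hfix : G x₀ = x₀ := hcontr.fixedPoint_isFixedPt
  have hx0k : (x₀ : ℚ_[p]) ^ k
      = 1 - q - (θ - 1) * ∑ j ∈ Finset.Icc 1 (k - 1), (x₀ : ℚ_[p]) ^ (k - j) := by
    have := hGpow x₀
    rw [hfix] at this
    exact this
  have hx0eq : (x₀ : ℚ_[p]) ^ k - 1 + (q : ℚ_[p])
      + (θ - 1) * ∑ j ∈ Finset.Icc 1 (k - 1), (x₀ : ℚ_[p]) ^ (k - j) = 0 := by
    linear_combination hx0k
  refine ⟨(x₀ : ℚ_[p]), ⟨lt_of_le_of_lt x₀.2 hpinv1, hx0eq⟩, ?_⟩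
  rintro y ⟨hy1, hy2⟩
  have hyb : ‖y - 1‖ ≤ (p:ℝ)⁻¹ := by
    have := aux_norm_lt (y - 1) 1 (by simpa using hy1)
    simpa using this
  have hdiffeq : y ^ k - (x₀ : ℚ_[p]) ^ k
      = (θ - 1) * ((∑ j ∈ Finset.Icc 1 (k - 1), (x₀ : ℚ_[p]) ^ (k - j))
          - ∑ j ∈ Finset.Icc 1 (k - 1), y ^ (k - j)) := by
    linear_combination hy2 - hx0eq
  have hL4' : ‖y ^ k - (x₀ : ℚ_[p]) ^ k‖ = ‖(k : ℚ_[p])‖ * ‖y - (x₀ : ℚ_[p])‖ :=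
    aux_L4 hp k hyb x₀.2
  have hRd := hRdiff (x₀ : ℚ_[p]) y x₀.2 hyb
  rw [norm_sub_rev ((x₀ : ℚ_[p])) y] at hRd
  have hkey : ‖(k : ℚ_[p])‖ * ‖y - (x₀ : ℚ_[p])‖ ≤ ‖θ - 1‖ * ‖y - (x₀ : ℚ_[p])‖ := by
    rw [← hL4', hdiffeq, norm_mul]
    exact mul_le_mul_of_nonneg_left hRd (norm_nonneg _)
  by_contra hne
  have h0 : 0 < ‖y - (x₀ : ℚ_[p])‖ := norm_pos_iff.mpr (sub_ne_zero.mpr hne)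
  nlinarith
end
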